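/- Suppose H is a symmetric positive definite n×n matrix with λ₁ I ⪯ H ⪯ λₙ I (0 < λ₁ ≤ λₙ), g ∈ R^n, and s satisfies sᵀHs = −sᵀg (the CG orthogonality property) together with ‖Hs + g‖ ≤ η‖g‖ for some η ∈ (0, η̄) with η̄ < 1. Then ((1−η̄)/λₙ)‖g‖ ≤ ‖s‖ ≤ (1/λ₁)‖g‖ and −gᵀs ≥ λ₁‖s‖². -/
import Mathlib


open scoped RealInnerProductSpace

/-- Bounds on an inexact Newton (CG) step. -/
theorem stmt_3 {n : ℕ} (H : EuclideanSpace ℝ (Fin n) →L[ℝ] EuclideanSpace ℝ (Fin n))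
    (g s : EuclideanSpace ℝ (Fin n)) (lam1 lamn eta etabar : ℝ)
    (hlam1 : 0 < lam1) (hlamn : lam1 ≤ lamn)
    (hsym : ∀ u v, ⟪H u, v⟫ = ⟪u, H v⟫)
    (hspec : ∀ v, lam1 * ‖v‖ ^ 2 ≤ ⟪v, H v⟫ ∧ ⟪v, H v⟫ ≤ lamn * ‖v‖ ^ 2)
    (hcg : ⟪s, H s⟫ = -⟪s, g⟫)
    (hres : ‖H s + g‖ ≤ eta * ‖g‖)
    (heta : 0 < eta) (hetabar : eta < etabar) (hbar1 : etabar < 1) :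
    (1 - etabar) / lamn * ‖g‖ ≤ ‖s‖ ∧ ‖s‖ ≤ 1 / lam1 * ‖g‖ ∧
      -⟪g, s⟫ ≥ lam1 * ‖s‖ ^ 2 := by
  have hlamn0 : (0:ℝ) < lamn := lt_of_lt_of_le hlam1 hlamn
  have hquad : lam1 * ‖s‖ ^ 2 ≤ ⟪s, H s⟫ := (hspec s).1
  have hcomm : ⟪g, s⟫ = ⟪s, g⟫ := real_inner_comm s g
  -- third claim
  have hgs : -⟪g, s⟫ ≥ lam1 * ‖s‖ ^ 2 := by
    rw [ge_iff_le, hcomm]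
    calc lam1 * ‖s‖ ^ 2 ≤ ⟪s, H s⟫ := hquad
      _ = -⟪s, g⟫ := hcg
  -- upper bound
  have hsg_le : -⟪s, g⟫ ≤ ‖s‖ * ‖g‖ := by
    calc -⟪s, g⟫ ≤ |⟪s, g⟫| := neg_le_abs _
      _ ≤ ‖s‖ * ‖g‖ := abs_real_inner_le_norm s g
  have hupper : ‖s‖ ≤ 1 / lam1 * ‖g‖ := by
    rcases eq_or_ne s 0 with h0 | h0
    · simp [h0]; positivity
    · have hns : (0:ℝ) < ‖s‖ := norm_pos_iff.mpr h0
      have h2 : lam1 * ‖s‖ ^ 2 ≤ ‖s‖ * ‖g‖ := by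
        calc lam1 * ‖s‖ ^ 2 ≤ ⟪s, H s⟫ := hquad
          _ = -⟪s, g⟫ := hcg
          _ ≤ ‖s‖ * ‖g‖ := hsg_le
      rw [div_mul_eq_mul_div, one_mul, le_div_iff₀ hlam1]
      nlinarith
  -- key: ‖H s‖² ≤ lamn * ⟪s, H s⟫
  have key : ‖H s‖ ^ 2 ≤ lamn * ⟪s, H s⟫ := by
    set w : EuclideanSpace ℝ (Fin n) := lamn • s - H s with hw
    have h1 : (0:ℝ) ≤ ⟪w, H w⟫ := by
      have := (hspec w).1
      nlinarith [sq_nonneg ‖w‖]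
    have hHHs : ⟪s, H (H s)⟫ = ‖H s‖ ^ 2 := by
      rw [← hsym s (H s), real_inner_self_eq_norm_sq]
    have hHsHHs : ⟪H s, H (H s)⟫ ≤ lamn * ‖H s‖ ^ 2 := (hspec (H s)).2
    have hexp : ⟪w, H w⟫ = lamn ^ 2 * ⟪s, H s⟫ - 2 * lamn * ‖H s‖ ^ 2
        + ⟪H s, H (H s)⟫ := by
      have hHw : H w = lamn • H s - H (H s) := by
        simp [hw, map_sub, map_smul]
      rw [hw, hHw, inner_sub_left, inner_sub_right, inner_sub_right,
        real_inner_smul_left, real_inner_smul_left, real_inner_smul_right,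
        real_inner_smul_right, hHHs, real_inner_self_eq_norm_sq]
      ring
    have h3 : 0 ≤ lamn * (lamn * ⟪s, H s⟫ - ‖H s‖ ^ 2) := by nlinarith
    nlinarith
  have hHs_le : ‖H s‖ ≤ lamn * ‖s‖ := by
    have h5 : ⟪s, H s⟫ ≤ lamn * ‖s‖ ^ 2 := (hspec s).2
    have h6 : ‖H s‖ ^ 2 ≤ (lamn * ‖s‖) ^ 2 := by nlinarith
    calc ‖H s‖ = Real.sqrt (‖H s‖ ^ 2) := (Real.sqrt_sq (norm_nonneg _)).symm
      _ ≤ Real.sqrt ((lamn * ‖s‖) ^ 2) := Real.sqrt_le_sqrt h6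
      _ = lamn * ‖s‖ := Real.sqrt_sq (by positivity)
  -- lower bound
  have hlower : (1 - etabar) / lamn * ‖g‖ ≤ ‖s‖ := by
    have htri : ‖g‖ ≤ ‖H s + g‖ + ‖H s‖ := by
      have hg : g = (H s + g) - H s := by abel
      calc ‖g‖ = ‖(H s + g) - H s‖ := by rw [← hg]
        _ ≤ ‖H s + g‖ + ‖H s‖ := norm_sub_le _ _
    have h7 : (1 - etabar) * ‖g‖ ≤ lamn * ‖s‖ := by
      nlinarith [norm_nonneg g]
    rw [div_mul_eq_mul_div, div_le_iff₀ hlamn0]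
    linarith
  exact ⟨hlower, hupper, hgs⟩
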